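/- For n ∈ {0, 2} and every r ∈ (0,1), ∫_0^1 (1 − cos(r t)) (1−t²)^{n−1/2} dt ≤ π r² / (28n + 8). -/

import Mathlib

open Real Set MeasureTheory

private lemma sqrt_poly_deriv {x : ℝ} (hx : x ∈ Set.Ioo (0:ℝ) 1) :
    HasDerivAt (fun t : ℝ => Real.sqrt (1 - t ^ 2)) (-x / Real.sqrt (1 - x ^ 2)) x := by
  have h1 : (0:ℝ) < 1 - x ^ 2 := by nlinarith [hx.1, hx.2]
  have hin : HasDerivAt (fun t : ℝ => 1 - t ^ 2) (-(2 * x)) x := by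
    simpa using (hasDerivAt_pow 2 x).const_sub 1
  have := (Real.hasDerivAt_sqrt h1.ne').comp x hin
  refine this.congr_deriv ?_
  field_simp

private lemma ii_g0 : IntervalIntegrable
    (fun t : ℝ => t ^ 2 * (1 - t ^ 2) ^ (-(1/2) : ℝ)) volume 0 1 := by
  have hd : IntervalIntegrable (fun t : ℝ => (1 - t) ^ (-(1/2) : ℝ)) volume 0 1 := by
    have := (intervalIntegral.intervalIntegrable_rpow'
      (by norm_num : (-1:ℝ) < -(1/2)) (a := 0) (b := 1)).comp_sub_left 1
    simpa using this.symm
  apply hd.mono_fun'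
  · exact (by measurability :
      Measurable fun t : ℝ => t ^ 2 * (1 - t ^ 2) ^ (-(1/2) : ℝ)).aestronglyMeasurable
  · filter_upwards [MeasureTheory.ae_restrict_mem measurableSet_uIoc] with x hx
    rw [Set.uIoc_of_le (by norm_num : (0:ℝ) ≤ 1)] at hx
    obtain ⟨hx0, hx1⟩ := hx
    have h1 : 0 ≤ 1 - x ^ 2 := by nlinarith
    have hnn : 0 ≤ x ^ 2 * (1 - x ^ 2) ^ (-(1/2) : ℝ) :=
      mul_nonneg (sq_nonneg x) (Real.rpow_nonneg h1 _)
    rw [Real.norm_of_nonneg hnn]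
    have hx2 : x ^ 2 ≤ 1 := by nlinarith
    calc x ^ 2 * (1 - x ^ 2) ^ (-(1/2) : ℝ)
        ≤ 1 * (1 - x ^ 2) ^ (-(1/2) : ℝ) :=
          mul_le_mul_of_nonneg_right hx2 (Real.rpow_nonneg h1 _)
      _ = (1 - x ^ 2) ^ (-(1/2) : ℝ) := one_mul _
      _ ≤ (1 - x) ^ (-(1/2) : ℝ) := by
          rcases eq_or_lt_of_le hx1 with h | h
          · subst h
            norm_num
          · exact Real.rpow_le_rpow_of_nonpos (by linarith) (by nlinarith) (by norm_num)

private lemma integral_g0 :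
    ∫ t in (0:ℝ)..1, t ^ 2 * (1 - t ^ 2) ^ (-(1/2) : ℝ) = π / 4 := by
  have h := intervalIntegral.integral_eq_sub_of_hasDeriv_right_of_le (a := 0) (b := 1)
    (f := fun t => (Real.arcsin t - t * Real.sqrt (1 - t ^ 2)) / 2)
    (f' := fun t => t ^ 2 * (1 - t ^ 2) ^ (-(1/2) : ℝ))
    zero_le_one ?_ ?_ ii_g0
  · rw [h]
    simp [Real.arcsin_one, Real.arcsin_zero]
    ring
  · exact ((Real.continuous_arcsin.sub (continuous_id.mul
      ((continuous_const.sub (continuous_pow 2)).sqrt))).div_const 2).continuousOn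
  · intro x hx
    have h1 : (0:ℝ) < 1 - x ^ 2 := by nlinarith [hx.1, hx.2]
    have hs : 0 < Real.sqrt (1 - x ^ 2) := Real.sqrt_pos.mpr h1
    have hsq : Real.sqrt (1 - x ^ 2) ^ 2 = 1 - x ^ 2 := Real.sq_sqrt h1.le
    have ha : HasDerivAt Real.arcsin (1 / Real.sqrt (1 - x ^ 2)) x :=
      Real.hasDerivAt_arcsin (by nlinarith [hx.1] : x ≠ -1) (ne_of_lt hx.2)
    have hprod : HasDerivAt (fun t : ℝ => t * Real.sqrt (1 - t ^ 2))
        (1 * Real.sqrt (1 - x ^ 2) + x * (-x / Real.sqrt (1 - x ^ 2))) x :=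
      (hasDerivAt_id x).mul (sqrt_poly_deriv hx)
    have hF := (ha.sub hprod).div_const 2
    apply HasDerivAt.hasDerivWithinAt
    refine hF.congr_deriv ?_
    symm
    show x ^ 2 * (1 - x ^ 2) ^ (-(1/2) : ℝ) = _
    have hr : (1 - x ^ 2) ^ (-(1/2) : ℝ) = 1 / Real.sqrt (1 - x ^ 2) := by
      rw [Real.rpow_neg h1.le, ← Real.sqrt_eq_rpow, one_div]
    rw [hr]
    field_simp
    nlinarith [hsq]

private lemma cont_g2 : Continuous (fun t : ℝ => t ^ 2 * (1 - t ^ 2) ^ ((3:ℝ)/2)) := by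
  apply (continuous_pow 2).mul
  apply (continuous_const.sub (continuous_pow 2)).rpow_const
  intro x
  right; norm_num

private lemma integral_g2 :
    ∫ t in (0:ℝ)..1, t ^ 2 * (1 - t ^ 2) ^ ((3:ℝ)/2) = π / 32 := by
  have h := intervalIntegral.integral_eq_sub_of_hasDeriv_right_of_le (a := 0) (b := 1)
    (f := fun t => Real.arcsin t / 16 +
      Real.sqrt (1 - t ^ 2) * (-(t/16) + 7*t^3/24 - t^5/6))
    (f' := fun t => t ^ 2 * (1 - t ^ 2) ^ ((3:ℝ)/2))
    zero_le_one ?_ ?_ (cont_g2.intervalIntegrable _ _)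
  · rw [h]
    norm_num [Real.arcsin_one, Real.arcsin_zero]
    ring
  · apply Continuous.continuousOn
    apply (Real.continuous_arcsin.div_const 16).add
    apply Continuous.mul
    · exact (continuous_const.sub (continuous_pow 2)).sqrt
    · continuity
  · intro x hx
    have h1 : (0:ℝ) < 1 - x ^ 2 := by nlinarith [hx.1, hx.2]
    have hs : 0 < Real.sqrt (1 - x ^ 2) := Real.sqrt_pos.mpr h1
    have hsq : Real.sqrt (1 - x ^ 2) ^ 2 = 1 - x ^ 2 := Real.sq_sqrt h1.le
    have ha : HasDerivAt Real.arcsin (1 / Real.sqrt (1 - x ^ 2)) x :=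
      Real.hasDerivAt_arcsin (by nlinarith [hx.1] : x ≠ -1) (ne_of_lt hx.2)
    have hp : HasDerivAt (fun t : ℝ => -(t/16) + 7*t^3/24 - t^5/6)
        (-(1/16) + 7*(3*x^2)/24 - 5*x^4/6) x := by
      have h3 := hasDerivAt_pow 3 x
      have h5 := hasDerivAt_pow 5 x
      have := (((hasDerivAt_id x).div_const 16).neg.add
        ((h3.const_mul (7:ℝ)).div_const 24)).sub (h5.div_const 6)
      refine this.congr_deriv ?_
      norm_num
    have hprod := (sqrt_poly_deriv hx).mul hp
    have hF := (ha.div_const 16).add hprod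
    apply HasDerivAt.hasDerivWithinAt
    refine hF.congr_deriv ?_
    symm
    show x ^ 2 * (1 - x ^ 2) ^ ((3:ℝ)/2) = _
    have hr : (1 - x ^ 2) ^ ((3:ℝ)/2) = (1 - x ^ 2) * Real.sqrt (1 - x ^ 2) := by
      rw [show (3:ℝ)/2 = 1 + 1/2 by norm_num, Real.rpow_add h1, Real.rpow_one,
        ← Real.sqrt_eq_rpow]
    have e1 : (1:ℝ) / Real.sqrt (1 - x ^ 2) = Real.sqrt (1 - x ^ 2) / (1 - x ^ 2) := by
      rw [div_eq_div_iff hs.ne' h1.ne']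
      linear_combination -hsq
    have e2 : -x / Real.sqrt (1 - x ^ 2) = -x * Real.sqrt (1 - x ^ 2) / (1 - x ^ 2) := by
      rw [div_eq_div_iff hs.ne' h1.ne']
      linear_combination x * hsq
    rw [hr, e1, e2]
    field_simp
    ring

theorem integral_one_sub_cos_bound (n : ℕ) (hn : n = 0 ∨ n = 2) (r : ℝ)
    (hr : r ∈ Set.Ioo (0 : ℝ) 1) :
    ∫ t in (0 : ℝ)..1, (1 - Real.cos (r * t)) * (1 - t ^ 2) ^ ((n : ℝ) - 1 / 2) ≤
      Real.pi * r ^ 2 / (28 * n + 8) := by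
  have main : ∀ e C : ℝ,
      IntervalIntegrable (fun t : ℝ => t ^ 2 * (1 - t ^ 2) ^ e) volume 0 1 →
      (∫ t in (0:ℝ)..1, t ^ 2 * (1 - t ^ 2) ^ e) = C →
      (∫ t in (0:ℝ)..1, (1 - Real.cos (r * t)) * (1 - t ^ 2) ^ e) ≤ r ^ 2 / 2 * C := by
    intro e C hGi hGval
    have hpoint : ∀ x ∈ Set.Icc (0:ℝ) 1,
        (1 - Real.cos (r * x)) * (1 - x ^ 2) ^ e ≤ r ^ 2 / 2 * (x ^ 2 * (1 - x ^ 2) ^ e) := by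
      intro x hx
      have h1 : (0:ℝ) ≤ 1 - x ^ 2 := by nlinarith [hx.1, hx.2]
      have h2 : (0:ℝ) ≤ (1 - x ^ 2) ^ e := Real.rpow_nonneg h1 e
      have h3 : 1 - Real.cos (r * x) ≤ (r * x) ^ 2 / 2 := by
        have := Real.one_sub_sq_div_two_le_cos (x := r * x)
        linarith
      calc (1 - Real.cos (r * x)) * (1 - x ^ 2) ^ e
          ≤ ((r * x) ^ 2 / 2) * (1 - x ^ 2) ^ e := mul_le_mul_of_nonneg_right h3 h2
        _ = r ^ 2 / 2 * (x ^ 2 * (1 - x ^ 2) ^ e) := by ring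
    have hGi' : IntervalIntegrable (fun t : ℝ => r ^ 2 / 2 * (t ^ 2 * (1 - t ^ 2) ^ e))
        volume 0 1 := hGi.const_mul _
    have hInt1 : IntervalIntegrable
        (fun t : ℝ => (1 - Real.cos (r * t)) * (1 - t ^ 2) ^ e) volume 0 1 := by
      apply hGi'.mono_fun'
      · exact (by fun_prop :
          Measurable fun t : ℝ => (1 - Real.cos (r * t)) * (1 - t ^ 2) ^ e).aestronglyMeasurable
      · filter_upwards [MeasureTheory.ae_restrict_mem measurableSet_uIoc] with x hx
        rw [Set.uIoc_of_le (by norm_num : (0:ℝ) ≤ 1)] at hx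
        have hx' : x ∈ Set.Icc (0:ℝ) 1 := ⟨hx.1.le, hx.2⟩
        have h1 : (0:ℝ) ≤ 1 - x ^ 2 := by nlinarith [hx'.1, hx'.2]
        have hnn : (0:ℝ) ≤ (1 - Real.cos (r * x)) * (1 - x ^ 2) ^ e :=
          mul_nonneg (by nlinarith [Real.cos_le_one (r * x)]) (Real.rpow_nonneg h1 e)
        rw [Real.norm_of_nonneg hnn]
        exact hpoint x hx'
    calc (∫ t in (0:ℝ)..1, (1 - Real.cos (r * t)) * (1 - t ^ 2) ^ e)
        ≤ ∫ t in (0:ℝ)..1, r ^ 2 / 2 * (t ^ 2 * (1 - t ^ 2) ^ e) :=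
          intervalIntegral.integral_mono_on zero_le_one hInt1 hGi' hpoint
      _ = r ^ 2 / 2 * C := by rw [intervalIntegral.integral_const_mul, hGval]
  rcases hn with h | h <;> subst h
  · rw [show ((0:ℕ):ℝ) - 1/2 = -(1/2) by norm_num]
    have := main (-(1/2)) (π/4) ii_g0 integral_g0
    calc _ ≤ r ^ 2 / 2 * (π/4) := this
      _ = π * r ^ 2 / (28 * (0:ℕ) + 8) := by norm_num; ring
  · rw [show ((2:ℕ):ℝ) - 1/2 = (3:ℝ)/2 by norm_num]
    have := main ((3:ℝ)/2) (π/32) (cont_g2.intervalIntegrable _ _) integral_g2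
    calc _ ≤ r ^ 2 / 2 * (π/32) := this
      _ = π * r ^ 2 / (28 * (2:ℕ) + 8) := by norm_num; ring
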